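/- (Minimization underlying the exponential convergence rate). Let a > 0 and define F : (0,1) → ℝ by F(c) = (a c)^{2c} · (1−c)^{1−c} / (1+c)^{1+c}. Then the infimum of F over (0,1) is attained at c_min = 1/√(1+a²), and F(c_min) < 1. -/

import Mathlib

open Real

private noncomputable def hfun (a c : ℝ) : ℝ :=
  log (a * c) * (2 * c) + log (1 - c) * (1 - c) - log (1 + c) * (1 + c)

private lemma hfun_hasDeriv (a : ℝ) (ha : 0 < a) {x : ℝ} (hx0 : 0 < x) (hx1 : x < 1) :
    HasDerivAt (hfun a) (2 * log (a * x) - log (1 - x) - log (1 + x)) x := by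
  have hax : a * x ≠ 0 := ne_of_gt (by positivity)
  have h1x : (1:ℝ) - x ≠ 0 := by linarith
  have h1x' : (1:ℝ) + x ≠ 0 := by linarith
  have d1 : HasDerivAt (fun c : ℝ => a * c) a x := by
    simpa using (hasDerivAt_id x).const_mul a
  have d2 : HasDerivAt (fun c : ℝ => log (a * c)) (a / (a * x)) x := d1.log hax
  have d3 : HasDerivAt (fun c : ℝ => 2 * c) 2 x := by
    simpa using (hasDerivAt_id x).const_mul (2:ℝ)
  have d4 := d2.mul d3
  have e1 : HasDerivAt (fun c : ℝ => 1 - c) (-1) x := by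
    simpa using (hasDerivAt_id' x).const_sub (1:ℝ)
  have e2 : HasDerivAt (fun c : ℝ => log (1 - c)) ((-1) / (1 - x)) x := e1.log h1x
  have e3 := e2.mul e1
  have f1 : HasDerivAt (fun c : ℝ => 1 + c) 1 x := by
    simpa using (hasDerivAt_id' x).const_add (1:ℝ)
  have f3 := (f1.log h1x').mul f1
  have total := (d4.add e3).sub f3
  convert total using 1
  · rfl
  · rfl
  · rfl
  have ha' : a ≠ 0 := ne_of_gt ha
  have hx' : x ≠ 0 := ne_of_gt hx0
  field_simp
  ring

private lemma F_eq_exp (a : ℝ) (ha : 0 < a) {c : ℝ} (hc0 : 0 < c) (hc1 : c < 1) :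
    (a * c) ^ (2 * c) * (1 - c) ^ (1 - c) / (1 + c) ^ (1 + c) = exp (hfun a c) := by
  rw [rpow_def_of_pos (by positivity), rpow_def_of_pos (by linarith),
    rpow_def_of_pos (by linarith), ← exp_add, ← exp_sub]
  rfl

/-- The key inequality: `hfun a` attains its minimum on `(0,1)` at `m = 1/√(1+a²)`. -/
private lemma hfun_min (a : ℝ) (ha : 0 < a) {m : ℝ} (hm0 : 0 < m) (hm1 : m < 1)
    (hmsq : m ^ 2 * (1 + a ^ 2) = 1) {c : ℝ} (hc0 : 0 < c) (hc1 : c < 1) :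
    hfun a m ≤ hfun a c := by
  have cont : ∀ x : ℝ, 0 < x → x < 1 → ContinuousAt (hfun a) x := fun x hx0 hx1 =>
    (hfun_hasDeriv a ha hx0 hx1).differentiableAt.continuousAt
  rcases lt_trichotomy c m with hlt | heq | hgt
  · -- deriv negative on (c, m), so hfun is strictly antitone on [c, m]
    have anti : StrictAntiOn (hfun a) (Set.Icc c m) := by
      apply strictAntiOn_of_deriv_neg (convex_Icc c m)
      · intro x hx
        exact (cont x (lt_of_lt_of_le hc0 hx.1) (lt_of_le_of_lt hx.2 hm1)).continuousWithinAt
      · intro x hx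
        rw [interior_Icc] at hx
        have hx0 : 0 < x := hc0.trans hx.1
        have hx1 : x < 1 := hx.2.trans hm1
        rw [(hfun_hasDeriv a ha hx0 hx1).deriv]
        have hkey : (a * x) ^ 2 < (1 - x) * (1 + x) := by nlinarith [hx.2, hmsq]
        have hlog : log ((a * x) ^ 2) < log ((1 - x) * (1 + x)) :=
          log_lt_log (by positivity) hkey
        have hlp : (2:ℝ) * log (a * x) = log ((a * x) ^ 2) := by
          rw [Real.log_pow]; norm_num
        rw [log_mul (by linarith) (by linarith)] at hlog
        linarith
    exact (anti (Set.left_mem_Icc.mpr hlt.le) (Set.right_mem_Icc.mpr hlt.le) hlt).le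
  · rw [heq]
  · -- deriv positive on (m, c), so hfun is strictly monotone on [m, c]
    have mono : StrictMonoOn (hfun a) (Set.Icc m c) := by
      apply strictMonoOn_of_deriv_pos (convex_Icc m c)
      · intro x hx
        exact (cont x (lt_of_lt_of_le hm0 hx.1) (lt_of_le_of_lt hx.2 hc1)).continuousWithinAt
      · intro x hx
        rw [interior_Icc] at hx
        have hx0 : 0 < x := hm0.trans hx.1
        have hx1 : x < 1 := hx.2.trans hc1
        rw [(hfun_hasDeriv a ha hx0 hx1).deriv]
        have hkey : (1 - x) * (1 + x) < (a * x) ^ 2 := by nlinarith [hx.1, hmsq]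
        have hlog : log ((1 - x) * (1 + x)) < log ((a * x) ^ 2) :=
          log_lt_log (by nlinarith) hkey
        have hlp : (2:ℝ) * log (a * x) = log ((a * x) ^ 2) := by
          rw [Real.log_pow]; norm_num
        rw [log_mul (by linarith) (by linarith)] at hlog
        linarith
    exact (mono (Set.left_mem_Icc.mpr hgt.le) (Set.right_mem_Icc.mpr hgt.le) hgt).le

/-- Minimization underlying the exponential convergence rate: for `a > 0` and
`F(c) = (ac)^{2c} (1-c)^{1-c} / (1+c)^{1+c}` on `(0,1)`, the infimum of `F` is attained
at `c_min = 1/√(1+a²)`, and `F(c_min) < 1`. -/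
theorem exponential_rate_minimization (a : ℝ) (ha : 0 < a) :
    (∀ c ∈ Set.Ioo (0:ℝ) 1,
        (a * (1 / Real.sqrt (1 + a ^ 2))) ^ (2 * (1 / Real.sqrt (1 + a ^ 2))) *
            (1 - 1 / Real.sqrt (1 + a ^ 2)) ^ (1 - 1 / Real.sqrt (1 + a ^ 2)) /
            (1 + 1 / Real.sqrt (1 + a ^ 2)) ^ (1 + 1 / Real.sqrt (1 + a ^ 2)) ≤
          (a * c) ^ (2 * c) * (1 - c) ^ (1 - c) / (1 + c) ^ (1 + c)) ∧
    (a * (1 / Real.sqrt (1 + a ^ 2))) ^ (2 * (1 / Real.sqrt (1 + a ^ 2))) *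
        (1 - 1 / Real.sqrt (1 + a ^ 2)) ^ (1 - 1 / Real.sqrt (1 + a ^ 2)) /
        (1 + 1 / Real.sqrt (1 + a ^ 2)) ^ (1 + 1 / Real.sqrt (1 + a ^ 2)) < 1 := by
  set m : ℝ := 1 / Real.sqrt (1 + a ^ 2) with hm_def
  have hpos : (0:ℝ) < 1 + a ^ 2 := by positivity
  have hs1 : 1 < Real.sqrt (1 + a ^ 2) := by
    have := Real.lt_sqrt (x := 1) (y := 1 + a ^ 2) (by norm_num)
    exact this.mpr (by nlinarith)
  have hspos : 0 < Real.sqrt (1 + a ^ 2) := by linarith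
  have hm0 : 0 < m := by positivity
  have hm1 : m < 1 := by
    rw [hm_def, div_lt_one hspos]; exact hs1
  have hmsq : m ^ 2 * (1 + a ^ 2) = 1 := by
    rw [hm_def, div_pow, one_pow, Real.sq_sqrt hpos.le]
    field_simp
  have hFm : (a * m) ^ (2 * m) * (1 - m) ^ (1 - m) / (1 + m) ^ (1 + m) = exp (hfun a m) :=
    F_eq_exp a ha hm0 hm1
  constructor
  · intro c hc
    rw [hFm, F_eq_exp a ha hc.1 hc.2]
    exact exp_le_exp.mpr (hfun_min a ha hm0 hm1 hmsq hc.1 hc.2)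
  · rw [hFm]
    have h2 : (a * m) ^ 2 = (1 - m) * (1 + m) := by nlinarith [hmsq]
    have e1 : 2 * log (a * m) = log (1 - m) + log (1 + m) := by
      have hlp : (2:ℝ) * log (a * m) = log ((a * m) ^ 2) := by
        rw [Real.log_pow]; norm_num
      rw [hlp, h2, log_mul (by linarith) (by linarith)]
    have hval : hfun a m = log (1 - m) - log (1 + m) := by
      unfold hfun
      linear_combination m * e1
    have hlt : log (1 - m) < log (1 + m) := log_lt_log (by linarith) (by linarith)
    rw [hval]
    exact exp_lt_one_iff.mpr (by linarith)
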